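/- Assume that for every (t,ω) ∈ [0,T] × Ω there exists ω̂ ∈ 𝒜(t,ω) such that X_u(ω̂) < X_t(ω) for all u ∈ (t,T]. Let t ∈ [0,T], ω ∈ Ω, let τ be a stopping time with τ(ω'') ≥ t for all ω'' ∈ 𝒜(t,ω), and let ω' ∈ 𝒜(t,ω) satisfy τ(ω') > σ*(ω'). Then for any ω̂ ∈ 𝒜(σ*(ω'), ω') with X_u(ω̂) < X_{σ*(ω')}(ω') for all u ∈ (σ*(ω'), T], one has R(t,ω;τ,ω̂) ≥ X*_{σ*(ω')}(ω') − X_{τ(ω̂)}(ω̂) > X*_{σ*(ω')}(ω') − X_{σ*(ω')}(ω') = R(t,ω;σ*,ω̂). -/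

import Mathlib

open Set

noncomputable section

namespace SellingRegret

/-- Running maximum `X*_t(ω) = sup_{s ∈ [0,t]} X_s(ω)`, where `X_s(ω) = ω s`. -/
def Mstar (ω : ℝ → ℝ) (t : ℝ) : ℝ :=
  sSup (ω '' Set.Icc 0 t)

/-- `𝒜(t,ω)`: the trajectories in `Ω` agreeing with `ω` on `[0,t]`. -/
def Hist (Ω : Set (ℝ → ℝ)) (t : ℝ) (ω : ℝ → ℝ) : Set (ℝ → ℝ) :=
  {ω' ∈ Ω | ∀ s ∈ Set.Icc 0 t, ω' s = ω s}

/-- A stopping time: a map `τ : Ω → [0,T]` such that whenever `τ(ω) ≤ t` and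
`ω'` agrees with `ω` on `[0,t]`, one has `τ(ω') = τ(ω)`. -/
def IsStoppingTime (T : ℝ) (Ω : Set (ℝ → ℝ)) (τ : (ℝ → ℝ) → ℝ) : Prop :=
  (∀ ω ∈ Ω, τ ω ∈ Set.Icc 0 T) ∧
  ∀ ω ∈ Ω, ∀ t ∈ Set.Icc 0 T, τ ω ≤ t →
    ∀ ω' ∈ Ω, (∀ s ∈ Set.Icc 0 t, ω' s = ω s) → τ ω' = τ ω

/-- Estimated regret `R(t,ω;τ,ω') = max{X*_{τ(ω')}(ω') − X_{τ(ω')}(ω'), ψ(τ(ω'),ω')}`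
(it depends only on `τ` and `ω'`). -/
def regret (ψ : ℝ → (ℝ → ℝ) → ℝ) (τ : (ℝ → ℝ) → ℝ) (ω' : ℝ → ℝ) : ℝ :=
  max (Mstar ω' (τ ω') - ω' (τ ω')) (ψ (τ ω') ω')

/-- Worst-case estimated regret `ℛ(t,ω;τ) = sup_{ω' ∈ 𝒜(t,ω)} R(t,ω;τ,ω')`,
valued in `[0,∞]`. -/
def worstRegret (Ω : Set (ℝ → ℝ)) (ψ : ℝ → (ℝ → ℝ) → ℝ)
    (t : ℝ) (ω : ℝ → ℝ) (τ : (ℝ → ℝ) → ℝ) : ENNReal :=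
  ⨆ ω' ∈ Hist Ω t ω, ENNReal.ofReal (regret ψ τ ω')

/-- `σ*(ω) = inf {s ∈ [0,T] : X*_s(ω) − X_s(ω) ≥ ψ(s,ω)}`. -/
def sigmaStar (T : ℝ) (ψ : ℝ → (ℝ → ℝ) → ℝ) (ω : ℝ → ℝ) : ℝ :=
  sInf {s ∈ Set.Icc 0 T | ψ s ω ≤ Mstar ω s - ω s}

/-- `τ ∈ 𝒯_t(ω)`: `τ(ω') ≥ t` for all `ω' ∈ 𝒜(t,ω)`. -/
def Admissible (Ω : Set (ℝ → ℝ)) (t : ℝ) (ω : ℝ → ℝ) (τ : (ℝ → ℝ) → ℝ) : Prop :=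
  ∀ ω' ∈ Hist Ω t ω, t ≤ τ ω'

/-- `σ` is optimal with respect to `𝒜(t,ω)`. -/
def OptimalAt (T : ℝ) (Ω : Set (ℝ → ℝ)) (ψ : ℝ → (ℝ → ℝ) → ℝ)
    (t : ℝ) (ω : ℝ → ℝ) (σ : (ℝ → ℝ) → ℝ) : Prop :=
  IsStoppingTime T Ω σ ∧ Admissible Ω t ω σ ∧
  ∀ τ, IsStoppingTime T Ω τ → Admissible Ω t ω τ →
    worstRegret Ω ψ t ω σ ≤ worstRegret Ω ψ t ω τ

/-- `σ` is Pareto optimal with respect to `𝒜(t,ω)`. -/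
def ParetoOptimalAt (T : ℝ) (Ω : Set (ℝ → ℝ)) (ψ : ℝ → (ℝ → ℝ) → ℝ)
    (t : ℝ) (ω : ℝ → ℝ) (σ : (ℝ → ℝ) → ℝ) : Prop :=
  IsStoppingTime T Ω σ ∧ Admissible Ω t ω σ ∧
  ¬ ∃ τ, IsStoppingTime T Ω τ ∧ Admissible Ω t ω τ ∧
      (∀ ω' ∈ Hist Ω t ω, regret ψ τ ω' ≤ regret ψ σ ω') ∧
      ∃ ω'' ∈ Hist Ω t ω, regret ψ τ ω'' < regret ψ σ ω''

/-- `σ` is perfect: optimal and Pareto optimal with respect to `𝒜(t,ω)`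
whenever it is admissible for `𝒜(t,ω)`. -/
def Perfect (T : ℝ) (Ω : Set (ℝ → ℝ)) (ψ : ℝ → (ℝ → ℝ) → ℝ)
    (σ : (ℝ → ℝ) → ℝ) : Prop :=
  IsStoppingTime T Ω σ ∧
  ∀ t ∈ Set.Icc 0 T, ∀ ω ∈ Ω, Admissible Ω t ω σ →
    OptimalAt T Ω ψ t ω σ ∧ ParetoOptimalAt T Ω ψ t ω σ

/-- Conditions (A) and (B) of Theorem 2 for a stopping time `σ`. -/
def CondAB (T : ℝ) (Ω : Set (ℝ → ℝ)) (ψ : ℝ → (ℝ → ℝ) → ℝ)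
    (σ : (ℝ → ℝ) → ℝ) : Prop :=
  ∀ τ, IsStoppingTime T Ω τ → ∀ ω ∈ Ω,
    (σ ω < τ ω → ∃ ω' ∈ Hist Ω (σ ω) ω, regret ψ σ ω' < regret ψ τ ω') ∧
    (τ ω < σ ω → ∀ ω' ∈ Hist Ω (τ ω) ω, regret ψ σ ω' < regret ψ τ ω')

/-- `Ω = C([0,T],ℝ)`: all trajectories continuous on `[0,T]`. -/
def OmegaC (T : ℝ) : Set (ℝ → ℝ) :=
  {ω | ContinuousOn ω (Set.Icc 0 T)}

/-- The two-sided Lipschitz corridor of Example 2: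
`−L₁(t−s) ≤ ω(t) − ω(s) ≤ L₂(t−s)` for `0 ≤ s ≤ t ≤ T`. -/
def OmegaL (T L₁ L₂ : ℝ) : Set (ℝ → ℝ) :=
  {ω | ∀ s t : ℝ, 0 ≤ s → s ≤ t → t ≤ T →
    -L₁ * (t - s) ≤ ω t - ω s ∧ ω t - ω s ≤ L₂ * (t - s)}

/-- under the reaching assumption, if `τ` is a stopping time
admissible for `𝒜(t,ω)` and `ω' ∈ 𝒜(t,ω)` satisfies `τ(ω') > σ*(ω')`, then for
any `ω̂ ∈ 𝒜(σ*(ω'),ω')` with `X_u(ω̂) < X_{σ*(ω')}(ω')` for `u ∈ (σ*(ω'),T]`: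
`R(t,ω;τ,ω̂) ≥ X*_{σ*(ω')}(ω') − X_{τ(ω̂)}(ω̂) > X*_{σ*(ω')}(ω') − X_{σ*(ω')}(ω')
 = R(t,ω;σ*,ω̂)`. -/

lemma bddAbove_image_Icc {ω : ℝ → ℝ} {T s : ℝ} (hc : ContinuousOn ω (Set.Icc 0 T))
    (hs : s ≤ T) : BddAbove (ω '' Set.Icc 0 s) :=
  (isCompact_Icc.image_of_continuousOn hc).bddAbove.mono
    (image_mono (Icc_subset_Icc le_rfl hs))

lemma Mstar_congr {g₁ g₂ : ℝ → ℝ} {s : ℝ} (h : ∀ u ∈ Set.Icc (0:ℝ) s, g₁ u = g₂ u) :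
    Mstar g₁ s = Mstar g₂ s := by
  unfold Mstar
  rw [image_congr h]

theorem stmt5 (T : ℝ) (hT : 0 < T) (Ω : Set (ℝ → ℝ))
    (hΩ : ∀ ω ∈ Ω, ContinuousOn ω (Set.Icc 0 T))
    (ψ : ℝ → (ℝ → ℝ) → ℝ)
    (hψT : ∀ ω ∈ Ω, ψ T ω = 0)
    (hψnn : ∀ ω ∈ Ω, ∀ t ∈ Set.Icc 0 T, 0 ≤ ψ t ω)
    (hψc : ∀ ω ∈ Ω, ContinuousOn (fun t => ψ t ω) (Set.Icc 0 T))
    (hψa : ∀ ω ∈ Ω, StrictAntiOn (fun t => ψ t ω) (Set.Icc 0 T))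
    (hψh : ∀ t ∈ Set.Icc 0 T, ∀ ω ∈ Ω, ∀ ω' ∈ Hist Ω t ω, ψ t ω' = ψ t ω)
    (hreach : ∀ t ∈ Set.Icc 0 T, ∀ ω ∈ Ω,
      ∃ ωh ∈ Hist Ω t ω, ∀ u, t < u → u ≤ T → ωh u < ω t)
    (t : ℝ) (ht : t ∈ Set.Icc 0 T) (ω : ℝ → ℝ) (hω : ω ∈ Ω)
    (τ : (ℝ → ℝ) → ℝ) (hτ : IsStoppingTime T Ω τ)
    (hadm : ∀ ω'' ∈ Hist Ω t ω, t ≤ τ ω'')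
    (ω' : ℝ → ℝ) (hω' : ω' ∈ Hist Ω t ω)
    (hgt : sigmaStar T ψ ω' < τ ω')
    (ωh : ℝ → ℝ) (hωh : ωh ∈ Hist Ω (sigmaStar T ψ ω') ω')
    (hdown : ∀ u, sigmaStar T ψ ω' < u → u ≤ T → ωh u < ω' (sigmaStar T ψ ω')) :
    Mstar ω' (sigmaStar T ψ ω') - ωh (τ ωh) ≤ regret ψ τ ωh ∧
    Mstar ω' (sigmaStar T ψ ω') - ω' (sigmaStar T ψ ω')
      < Mstar ω' (sigmaStar T ψ ω') - ωh (τ ωh) ∧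
    Mstar ω' (sigmaStar T ψ ω') - ω' (sigmaStar T ψ ω')
      = regret ψ (sigmaStar T ψ) ωh := by

  obtain ⟨hω'Ω, hω'ag⟩ := hω'
  obtain ⟨hωhΩ, hωhag⟩ := hωh
  have hω'c := hΩ ω' hω'Ω
  have hωhc := hΩ ωh hωhΩ
  set σ : ℝ := sigmaStar T ψ ω' with hσdef
  set S : Set ℝ := {s ∈ Set.Icc 0 T | ψ s ω' ≤ Mstar ω' s - ω' s} with hSdef
  have hσS : σ = sInf S := rfl
  have hbddS : BddBelow S := ⟨0, fun s hs => hs.1.1⟩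
  have hMT : ω' T ≤ Mstar ω' T :=
    le_csSup (bddAbove_image_Icc hω'c le_rfl) ⟨T, ⟨hT.le, le_rfl⟩, rfl⟩
  have hTS : T ∈ S := ⟨⟨hT.le, le_rfl⟩, by rw [hψT ω' hω'Ω]; linarith⟩
  have hSne : S.Nonempty := ⟨T, hTS⟩
  have hσ0 : 0 ≤ σ := by rw [hσS]; exact le_csInf hSne fun s hs => hs.1.1
  have hσT : σ ≤ T := by rw [hσS]; exact csInf_le hbddS hTS
  have hσmem : σ ∈ Set.Icc (0:ℝ) T := ⟨hσ0, hσT⟩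
  have hMσself : ω' σ ≤ Mstar ω' σ :=
    le_csSup (bddAbove_image_Icc hω'c hσT) ⟨σ, ⟨hσ0, le_rfl⟩, rfl⟩
  -- key: σ ∈ S
  have hkey : ψ σ ω' + ω' σ ≤ Mstar ω' σ := by
    refine le_of_forall_pos_le_add fun ε hε => ?_
    have hg : ContinuousWithinAt (fun s => ψ s ω' + ω' s) (Set.Icc 0 T) σ :=
      ((hψc ω' hω'Ω σ hσmem).add (hω'c σ hσmem))
    rw [Metric.continuousWithinAt_iff] at hg
    obtain ⟨δ₁, hδ₁, hg1⟩ := hg (ε/2) (by linarith)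
    have hω'cw := hω'c σ hσmem
    rw [Metric.continuousWithinAt_iff] at hω'cw
    obtain ⟨δ₂, hδ₂, hg2⟩ := hω'cw (ε/2) (by linarith)
    obtain ⟨s, hsS, hslt⟩ := Real.lt_sInf_add_pos hSne (lt_min hδ₁ hδ₂)
    rw [← hσS] at hslt
    have hsσ : σ ≤ s := by rw [hσS]; exact csInf_le hbddS hsS
    have hsT : s ≤ T := hsS.1.2
    have hMs : Mstar ω' s ≤ Mstar ω' σ + ε/2 := by
      have hne : (ω' '' Set.Icc 0 s).Nonempty := ⟨ω' 0, ⟨0, ⟨le_rfl, hsS.1.1⟩, rfl⟩⟩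
      apply csSup_le hne
      rintro x ⟨u, ⟨hu0, hus⟩, rfl⟩
      by_cases hu : u ≤ σ
      · have : ω' u ≤ Mstar ω' σ :=
          le_csSup (bddAbove_image_Icc hω'c hσT) ⟨u, ⟨hu0, hu⟩, rfl⟩
        linarith
      · push_neg at hu
        have hd : dist u σ < δ₂ := by
          rw [Real.dist_eq, abs_of_nonneg (by linarith)]
          have h2 := min_le_right δ₁ δ₂
          linarith
        have h3 := hg2 ⟨hu0, hus.trans hsT⟩ hd
        rw [Real.dist_eq] at h3
        have h4 := abs_lt.mp h3
        linarith [h4.2]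
    have hgs : ψ σ ω' + ω' σ ≤ ψ s ω' + ω' s + ε/2 := by
      have hd : dist s σ < δ₁ := by
        rw [Real.dist_eq, abs_of_nonneg (by linarith)]
        have h2 := min_le_left δ₁ δ₂
        linarith
      have h3 := hg1 ⟨hsS.1.1, hsT⟩ hd
      rw [Real.dist_eq] at h3
      have h4 := abs_lt.mp h3
      linarith [h4.2]
    have hsmem : ψ s ω' ≤ Mstar ω' s - ω' s := hsS.2
    linarith
  have hσSmem : σ ∈ S := ⟨hσmem, by linarith⟩
  -- agreement facts
  have hψsh : ∀ s, 0 ≤ s → s ≤ σ → ψ s ωh = ψ s ω' := fun s h0 hs =>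
    hψh s ⟨h0, hs.trans hσT⟩ ω' hω'Ω ωh ⟨hωhΩ, fun u hu => hωhag u ⟨hu.1, hu.2.trans hs⟩⟩
  have hMeq : Mstar ωh σ = Mstar ω' σ := Mstar_congr fun u hu => hωhag u hu
  -- sigmaStar of ωh equals σ
  have hsheq : sigmaStar T ψ ωh = σ := by
    apply le_antisymm
    · apply csInf_le ⟨0, fun s hs => hs.1.1⟩
      refine ⟨hσmem, ?_⟩
      rw [hψsh σ hσ0 le_rfl, hMeq, hωhag σ ⟨hσ0, le_rfl⟩]
      linarith
    · have hne : {s ∈ Set.Icc 0 T | ψ s ωh ≤ Mstar ωh s - ωh s}.Nonempty :=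
        ⟨σ, ⟨hσmem, by
          rw [hψsh σ hσ0 le_rfl, hMeq, hωhag σ ⟨hσ0, le_rfl⟩]; linarith⟩⟩
      apply le_csInf hne
      intro s hs
      by_contra hlt
      push_neg at hlt
      have hsS' : s ∈ S := by
        refine ⟨hs.1, ?_⟩
        have e1 := hψsh s hs.1.1 hlt.le
        have e2 : Mstar ωh s = Mstar ω' s :=
          Mstar_congr fun u hu => hωhag u ⟨hu.1, hu.2.trans hlt.le⟩
        have e3 := hωhag s ⟨hs.1.1, hlt.le⟩
        have := hs.2
        rw [e1, e2, e3] at this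
        exact this
      have : σ ≤ s := by rw [hσS]; exact csInf_le hbddS hsS'
      linarith
  -- τ ωh > σ
  have hτωhT : τ ωh ≤ T := (hτ.1 ωh hωhΩ).2
  have hτωhgt : σ < τ ωh := by
    by_contra h
    push_neg at h
    have := hτ.2 ωh hωhΩ σ hσmem h ω' hω'Ω (fun s hs => (hωhag s hs).symm)
    linarith
  have hdrop : ωh (τ ωh) < ω' σ := hdown (τ ωh) hτωhgt hτωhT
  have hMmono : Mstar ωh σ ≤ Mstar ωh (τ ωh) :=
    csSup_le_csSup (bddAbove_image_Icc hωhc hτωhT) ⟨ωh 0, ⟨0, ⟨le_rfl, hσ0⟩, rfl⟩⟩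
      (image_mono (Icc_subset_Icc le_rfl hτωhgt.le))
  refine ⟨?_, by linarith, ?_⟩
  · have h1 : Mstar ωh (τ ωh) - ωh (τ ωh) ≤ regret ψ τ ωh := le_max_left _ _
    have h2 : Mstar ω' σ ≤ Mstar ωh (τ ωh) := by rw [← hMeq]; exact hMmono
    linarith
  · unfold regret
    rw [hsheq, hMeq, hωhag σ ⟨hσ0, le_rfl⟩, hψsh σ hσ0 le_rfl]
    exact (max_eq_left (by linarith)).symm


end SellingRegret

end
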